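/- Let A be an associative unital ℚ-algebra with a central element t such that A is t-adically separated and t-adically complete. Let N ≥ 1 and let P, Q ∈ Mat_N(A) be idempotent matrices (P·P = P and Q·Q = Q) such that every entry of P − Q lies in tA. Then Tr(P) − Tr(Q) lies in the additive subgroup of A generated by the commutators {a·b − b·a : a, b ∈ A}. (In particular, any ℚ-linear functional on A vanishing on all commutators takes the same value on Tr(P) and Tr(Q).) -/

import Mathlib

section Aux

variable {A : Type*} [Ring A] {t : A}

private lemma tpow_central (hc : ∀ a : A, t * a = a * t) (n : ℕ) (a : A) :
    t ^ n * a = a * t ^ n := by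
  induction n with
  | zero => simp
  | succ n ih => rw [pow_succ, mul_assoc, hc, ← mul_assoc, ih, mul_assoc]

/-- divisibility by `t ^ n` -/
private def Dv (t : A) (n : ℕ) (x : A) : Prop := ∃ b, x = t ^ n * b

private lemma Dv.add {n : ℕ} {x y : A} (hx : Dv t n x) (hy : Dv t n y) :
    Dv t n (x + y) := by
  obtain ⟨b, rfl⟩ := hx; obtain ⟨c, rfl⟩ := hy
  exact ⟨b + c, (mul_add _ _ _).symm⟩

private lemma Dv.neg {n : ℕ} {x : A} (hx : Dv t n x) : Dv t n (-x) := by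
  obtain ⟨b, rfl⟩ := hx; exact ⟨-b, (mul_neg _ _).symm⟩

private lemma Dv.sub {n : ℕ} {x y : A} (hx : Dv t n x) (hy : Dv t n y) :
    Dv t n (x - y) := by
  rw [sub_eq_add_neg]; exact hx.add hy.neg

private lemma Dv.mul_right {n : ℕ} {x : A} (hx : Dv t n x) (c : A) :
    Dv t n (x * c) := by
  obtain ⟨b, rfl⟩ := hx; exact ⟨b * c, mul_assoc _ _ _⟩

private lemma Dv.mul_left (hc : ∀ a : A, t * a = a * t) {n : ℕ} {x : A}
    (hx : Dv t n x) (c : A) : Dv t n (c * x) := by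
  obtain ⟨b, rfl⟩ := hx
  exact ⟨c * b, by rw [← mul_assoc, ← tpow_central hc, mul_assoc]⟩

private lemma Dv.sum {ι : Type*} {n : ℕ} {s : Finset ι} {f : ι → A}
    (h : ∀ i ∈ s, Dv t n (f i)) : Dv t n (∑ i ∈ s, f i) := by
  classical
  induction s using Finset.induction with
  | empty => exact ⟨0, by simp⟩
  | @insert a s hx ih =>
    rw [Finset.sum_insert hx]
    exact (h _ (Finset.mem_insert_self _ _)).add
      (ih fun i hi => h i (Finset.mem_insert_of_mem hi))

private lemma Dv.mul (hc : ∀ a : A, t * a = a * t) {m n : ℕ} {x y : A}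
    (hx : Dv t m x) (hy : Dv t n y) : Dv t (m + n) (x * y) := by
  obtain ⟨b, rfl⟩ := hx; obtain ⟨c, rfl⟩ := hy
  exact ⟨b * c, by
    rw [pow_add, mul_assoc, mul_assoc, ← mul_assoc b, ← tpow_central hc n b, mul_assoc]⟩

private lemma matpow_dv (hc : ∀ a : A, t * a = a * t) {N : ℕ}
    {E : Matrix (Fin N) (Fin N) A} (hE : ∀ i j, Dv t 1 (E i j)) :
    ∀ n i j, Dv t n ((E ^ n) i j) := by
  intro n
  induction n with
  | zero => intro i j; exact ⟨(1 : Matrix (Fin N) (Fin N) A) i j, by simp⟩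
  | succ n ih =>
    intro i j
    rw [pow_succ]
    rw [show (E ^ n * E) i j = ∑ k, (E ^ n) i k * E k j from Matrix.mul_apply]
    exact Dv.sum fun k _ => (ih i k).mul hc (hE k j)

private lemma matmul_dv_left {N : ℕ} {n : ℕ} {M K : Matrix (Fin N) (Fin N) A}
    (h : ∀ i j, Dv t n (M i j)) : ∀ i j, Dv t n ((M * K) i j) := by
  intro i j
  rw [show (M * K) i j = ∑ k, M i k * K k j from Matrix.mul_apply]
  exact Dv.sum fun k _ => (h i k).mul_right _

private lemma matmul_dv_right (hc : ∀ a : A, t * a = a * t) {N : ℕ} {n : ℕ}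
    {M K : Matrix (Fin N) (Fin N) A}
    (h : ∀ i j, Dv t n (K i j)) : ∀ i j, Dv t n ((M * K) i j) := by
  intro i j
  rw [show (M * K) i j = ∑ k, M i k * K k j from Matrix.mul_apply]
  exact Dv.sum fun k _ => (h k j).mul_left hc _

/-- A matrix congruent to 1 mod t is invertible, by geometric series. -/
private lemma exists_inverse (hc : ∀ a : A, t * a = a * t)
    (hsep : ∀ a : A, (∀ n : ℕ, ∃ b : A, a = t ^ n * b) → a = 0)
    (hcomplete : ∀ s : ℕ → A,
      (∀ n : ℕ, ∃ b : A, s (n + 1) - s n = t ^ n * b) →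
      ∃ a : A, ∀ n : ℕ, ∃ b : A, a - s n = t ^ n * b)
    {N : ℕ} (E : Matrix (Fin N) (Fin N) A)
    (hE : ∀ i j, Dv t 1 (E i j)) :
    ∃ S : Matrix (Fin N) (Fin N) A, S * (1 - E) = 1 ∧ (1 - E) * S = 1 := by
  classical
  set s : ℕ → Matrix (Fin N) (Fin N) A := fun n => ∑ k ∈ Finset.range n, E ^ k with hs
  have hpow := matpow_dv hc hE
  have hstep : ∀ n, s (n + 1) = s n + E ^ n := fun n => Finset.sum_range_succ _ _
  have hseq : ∀ i j : Fin N, ∃ a : A, ∀ n, ∃ b, a - s n i j = t ^ n * b := by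
    intro i j
    refine hcomplete (fun n => s n i j) fun n => ?_
    obtain ⟨b, hb⟩ := hpow n i j
    refine ⟨b, ?_⟩
    show s (n + 1) i j - s n i j = t ^ n * b
    rw [hstep n, Matrix.add_apply]
    simpa using hb
  choose Sf hSf using hseq
  set S : Matrix (Fin N) (Fin N) A := Matrix.of Sf with hSdef
  have hdiff : ∀ n i j, Dv t n ((S - s n) i j) := by
    intro n i j
    obtain ⟨b, hb⟩ := hSf i j n
    exact ⟨b, by simpa [Matrix.sub_apply, hSdef] using hb⟩
  have hg : ∀ n, s n * (1 - E) = 1 - E ^ n := by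
    intro n
    have h := geom_sum_mul E n
    calc s n * (1 - E) = -((∑ k ∈ Finset.range n, E ^ k) * (E - 1)) := by
          rw [hs]; noncomm_ring
      _ = 1 - E ^ n := by rw [h]; noncomm_ring
  have hcommE : ∀ n, (1 - E) * s n = s n * (1 - E) := by
    intro n
    have : E * s n = s n * E := by
      rw [hs, Finset.mul_sum, Finset.sum_mul]
      exact Finset.sum_congr rfl fun k _ => (Commute.pow_right (Commute.refl E) k).eq
    rw [sub_mul, mul_sub, one_mul, mul_one, this]
  have key1 : S * (1 - E) = 1 := by
    rw [← sub_eq_zero]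
    ext i j
    refine hsep _ fun n => ?_
    have hT : S * (1 - E) - 1 = (S - s n) * (1 - E) - E ^ n := by
      rw [sub_mul, hg n]; noncomm_ring
    have : Dv t n ((S * (1 - E) - 1) i j) := by
      rw [hT, Matrix.sub_apply]
      exact (matmul_dv_left (hdiff n) i j).sub (hpow n i j)
    obtain ⟨b, hb⟩ := this
    exact ⟨b, by simpa using hb⟩
  have key2 : (1 - E) * S = 1 := by
    rw [← sub_eq_zero]
    ext i j
    refine hsep _ fun n => ?_
    have hT : (1 - E) * S - 1 = (1 - E) * (S - s n) - E ^ n := by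
      rw [mul_sub, hcommE n, hg n]; noncomm_ring
    have : Dv t n (((1 - E) * S - 1) i j) := by
      rw [hT, Matrix.sub_apply]
      exact (matmul_dv_right hc (hdiff n) i j).sub (hpow n i j)
    obtain ⟨b, hb⟩ := this
    exact ⟨b, by simpa using hb⟩
  exact ⟨S, key1, key2⟩

/-- Trace of XY minus trace of YX is a sum of commutators. -/
private lemma trace_comm_mem {N : ℕ} (X Y : Matrix (Fin N) (Fin N) A) :
    Matrix.trace (X * Y) - Matrix.trace (Y * X) ∈
      AddSubgroup.closure {x : A | ∃ a b : A, x = a * b - b * a} := by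
  have h1 : Matrix.trace (X * Y) = ∑ i, ∑ j, X i j * Y j i := by
    simp [Matrix.trace, Matrix.mul_apply, Matrix.diag]
  have h2 : Matrix.trace (Y * X) = ∑ i, ∑ j, Y j i * X i j := by
    rw [show Matrix.trace (Y * X) = ∑ j, ∑ i, Y j i * X i j by
      simp [Matrix.trace, Matrix.mul_apply, Matrix.diag]]
    exact Finset.sum_comm
  rw [h1, h2, ← Finset.sum_sub_distrib]
  refine AddSubgroup.sum_mem _ fun i _ => ?_
  rw [← Finset.sum_sub_distrib]
  exact AddSubgroup.sum_mem _ fun j _ =>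
    AddSubgroup.subset_closure ⟨X i j, Y j i, rfl⟩

end Aux

/-- Idempotent matrices over a `t`-adically separated and complete ℚ-algebra whose
entries agree modulo `t` have traces that agree modulo commutators. -/
theorem trace_idempotents_congruent_mod_commutators
    (A : Type*) [Ring A] [Algebra ℚ A] (t : A)
    (hcentral : ∀ a : A, t * a = a * t)
    (hsep : ∀ a : A, (∀ n : ℕ, ∃ b : A, a = t ^ n * b) → a = 0)
    (hcomplete : ∀ s : ℕ → A,
      (∀ n : ℕ, ∃ b : A, s (n + 1) - s n = t ^ n * b) →
      ∃ a : A, ∀ n : ℕ, ∃ b : A, a - s n = t ^ n * b)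
    (N : ℕ) (hN : 1 ≤ N)
    (P Q : Matrix (Fin N) (Fin N) A)
    (hP : P * P = P) (hQ : Q * Q = Q)
    (hPQ : ∀ i j : Fin N, ∃ b : A, P i j - Q i j = t * b) :
    Matrix.trace P - Matrix.trace Q ∈
      AddSubgroup.closure {x : A | ∃ a b : A, x = a * b - b * a} := by
  classical
  set Z : Matrix (Fin N) (Fin N) A := P * Q + (1 - P) * (1 - Q) with hZdef
  set E : Matrix (Fin N) (Fin N) A := 1 - Z with hEdef
  -- entries of P - Q are divisible by t
  have hdPQ : ∀ i j, Dv t 1 ((P - Q) i j) := by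
    intro i j
    obtain ⟨b, hb⟩ := hPQ i j
    exact ⟨b, by simpa [Matrix.sub_apply, pow_one] using hb⟩
  have hdQP : ∀ i j, Dv t 1 ((Q - P) i j) := by
    intro i j
    have := (hdPQ i j).neg
    simpa [Matrix.sub_apply, neg_sub] using this
  -- E = -(P*(Q-P) + (P-Q)*Q), whose entries are divisible by t
  have hZ1 : Z - 1 = P * (Q - P) + (P - Q) * Q := by
    have e1 : P * (Q - P) + (P - Q) * Q = P * Q + P * Q - P * P - Q * Q := by
      noncomm_ring
    rw [e1, hP, hQ, hZdef]
    noncomm_ring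
  have hEeq : E = -(P * (Q - P) + (P - Q) * Q) := by
    rw [hEdef, ← hZ1]; noncomm_ring
  have hE : ∀ i j, Dv t 1 (E i j) := by
    intro i j
    rw [hEeq]
    have h1 := matmul_dv_right hcentral (M := P) hdQP i j
    have h2 := matmul_dv_left (K := Q) hdPQ i j
    have := (h1.add h2).neg
    simpa [Matrix.neg_apply, Matrix.add_apply] using this
  obtain ⟨S, hS1, hS2⟩ := exists_inverse hcentral hsep hcomplete E hE
  have hZS : Z * S = 1 := by rw [hEdef] at hS2; simpa using hS2
  have hSZ : S * Z = 1 := by rw [hEdef] at hS1; simpa using hS1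
  -- Z * Q = P * Q = P * Z
  have hZQ : Z * Q = P * Q := by
    have e : Z * Q = P * (Q * Q) + Q - Q * Q - (P * Q - P * (Q * Q)) := by
      rw [hZdef]; noncomm_ring
    rw [e, hQ]; noncomm_ring
  have hPZ : P * Z = P * Q := by
    have e : P * Z = (P * P) * Q + P - P * P - (P * Q - (P * P) * Q) := by
      rw [hZdef]; noncomm_ring
    rw [e, hP]; noncomm_ring
  have hPeq : P = (Z * Q) * S := by
    rw [hZQ, ← hPZ, mul_assoc, hZS, mul_one]
  have hQeq : Q = S * (Z * Q) := by
    rw [← mul_assoc, hSZ, one_mul]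
  have hkey : Matrix.trace P - Matrix.trace Q
      = Matrix.trace ((Z * Q) * S) - Matrix.trace (S * (Z * Q)) := by
    rw [← hPeq, ← hQeq]
  rw [hkey]
  exact trace_comm_mem (Z * Q) S
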